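/- Corollary 2 (the family structure is recovered at K = Q_fam). Under Assumptions 1, 2a, 3, 4, 5 and family plurality, when Ward's algorithm has produced exactly K = Q_fam clusters, lim_{n→∞} P( for every cluster k of the Q_fam-cluster partition there exists a family F_q with F̂_k(Q_fam) = F_q, and every family arises from exactly one cluster in this way ) = 1. -/

import Mathlib

open MeasureTheory Filter Matrix Finset ProbabilityTheory

noncomputable section

/-- Convergence in probability, across a sequence of probability spaces `(Ω n, μ n)`,
of random elements `X n : Ω n → E` of a (pseudo)metric space to a constant `c`. -/
def TendstoInProb {Ω : ℕ → Type*} [∀ n, MeasurableSpace (Ω n)]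
    (μ : ∀ n, Measure (Ω n)) {E : Type*} [PseudoMetricSpace E]
    (X : ∀ n, Ω n → E) (c : E) : Prop :=
  ∀ ε : ℝ, 0 < ε → Tendsto (fun n => μ n {ω | ε < dist (X n ω) c}) atTop (nhds 0)

/-- Convergence in distribution (weak convergence of the laws), across a sequence of
probability spaces, of random elements `X n : Ω n → E` to a limiting measure `ν` on `E`. -/
def TendstoInDist {Ω : ℕ → Type*} [∀ n, MeasurableSpace (Ω n)]
    (μ : ∀ n, Measure (Ω n)) {E : Type*} [TopologicalSpace E] [PseudoMetricSpace E]
    [MeasurableSpace E] (X : ∀ n, Ω n → E) (ν : Measure E) : Prop :=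
  ∀ f : BoundedContinuousFunction E ℝ,
    Tendsto (fun n => ∫ ω, f (X n ω) ∂(μ n)) atTop (nhds (∫ x, f x ∂ν))

/-- `ν` is a centered (multivariate) Gaussian measure on `ι → ℝ` with covariance matrix
`C`: every linear functional pushes `ν` forward to a centered real Gaussian with the
corresponding variance. -/
def IsCenteredGaussian {ι : Type*} [Fintype ι] (ν : Measure (ι → ℝ))
    (C : Matrix ι ι ℝ) : Prop :=
  IsProbabilityMeasure ν ∧
    ∀ l : ι → ℝ, ν.map (fun x => ∑ i, l i * x i) =
      gaussianReal 0 (Real.toNNReal (l ⬝ᵥ C *ᵥ l))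

/-- A combination of `P` instruments out of `J`: a `P`-subset `[j]` of `{1,…,J}`. -/
abbrev Combo (J P : ℕ) := {S : Finset (Fin J) // S.card = P}

/-- The increasing enumeration of the instruments in the combination `S`. -/
def comboEmb {J P : ℕ} (S : Combo J P) (i : Fin P) : Fin J :=
  (S.1.orderIsoOfFin S.2 i : Fin J)

lemma combo_compl_card {J P : ℕ} (S : Combo J P) : (S.1ᶜ).card = J - P := by
  simp [Finset.card_compl, S.2]

/-- The increasing enumeration of the instruments **not** in the combination `S`. -/
def comboComplEmb {J P : ℕ} (S : Combo J P) (i : Fin (J - P)) : Fin J :=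
  ((S.1ᶜ).orderIsoOfFin (combo_compl_card S) i : Fin J)

/-- `γ_[j]`: the `P × P` submatrix of rows of `γ` corresponding to the combination `S`. -/
def rowsOf {J P : ℕ} (γ : Matrix (Fin J) (Fin P) ℝ) (S : Combo J P) :
    Matrix (Fin P) (Fin P) ℝ :=
  Matrix.of fun i k => γ (comboEmb S i) k

/-- `γ₂`: the `(J−P) × P` submatrix of rows of `γ` for instruments outside `S`. -/
def rowsOfCompl {J P : ℕ} (γ : Matrix (Fin J) (Fin P) ℝ) (S : Combo J P) :
    Matrix (Fin (J - P)) (Fin P) ℝ :=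
  Matrix.of fun i k => γ (comboComplEmb S i) k

/-- `α_[j]`: the subvector of `α` corresponding to the combination `S`. -/
def subvec {J P : ℕ} (α : Fin J → ℝ) (S : Combo J P) : Fin P → ℝ :=
  fun i => α (comboEmb S i)

/-- `α₂`: the subvector of `α` for instruments outside `S`. -/
def subvecCompl {J P : ℕ} (α : Fin J → ℝ) (S : Combo J P) : Fin (J - P) → ℝ :=
  fun i => α (comboComplEmb S i)

/-- Assumption 1: `E[z_i z_i'] = Q` is finite and of full rank. -/
def Assumption1 {J : ℕ} (Q : Matrix (Fin J) (Fin J) ℝ) : Prop := IsUnit Q.det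

/-- The linear IV model with potentially invalid instruments: for each sample size `n`,
data on a probability space `(Ω n, μ n)` generated by `y = Dβ + Zα + u`, `D = Zγ + E`. -/
structure IVModel (J P : ℕ) (Ω : ℕ → Type*) [∀ n, MeasurableSpace (Ω n)] where
  /-- the probability measure at sample size `n` -/
  μ : ∀ n, Measure (Ω n)
  /-- the `n × J` instrument matrix -/
  Z : ∀ n, Ω n → Matrix (Fin n) (Fin J) ℝ
  /-- the structural error -/
  u : ∀ n, Ω n → Fin n → ℝ
  /-- the first-stage error matrix -/
  Eps : ∀ n, Ω n → Matrix (Fin n) (Fin P) ℝ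
  /-- the causal parameter of interest -/
  β : Fin P → ℝ
  /-- the direct effects of the instruments (instrument `j` is valid iff `α j = 0`) -/
  α : Fin J → ℝ
  /-- the `J × P` first-stage coefficient matrix -/
  γ : Matrix (Fin J) (Fin P) ℝ

namespace IVModel

variable {J P : ℕ} {Ω : ℕ → Type*} [∀ n, MeasurableSpace (Ω n)] (M : IVModel J P Ω)

/-- The endogenous regressors `D = Zγ + E`. -/
def D (n : ℕ) (ω : Ω n) : Matrix (Fin n) (Fin P) ℝ := M.Z n ω * M.γ + M.Eps n ω

/-- The outcome `y = Dβ + Zα + u`. -/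
def y (n : ℕ) (ω : Ω n) : Fin n → ℝ := M.D n ω *ᵥ M.β + M.Z n ω *ᵥ M.α + M.u n ω

/-- The `n × (1 + P)` error matrix with rows `w_i = (u_i, ε_i')'`. -/
def W (n : ℕ) (ω : Ω n) : Matrix (Fin n) (Unit ⊕ Fin P) ℝ :=
  Matrix.of fun i a => Sum.elim (fun _ => M.u n ω i) (fun p => M.Eps n ω i p) a

/-- The first-stage OLS estimator `γ̂ = (Z'Z)⁻¹Z'D`. -/
def γhat (n : ℕ) (ω : Ω n) : Matrix (Fin J) (Fin P) ℝ :=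
  ((M.Z n ω)ᵀ * M.Z n ω)⁻¹ * ((M.Z n ω)ᵀ * M.D n ω)

/-- The reduced-form OLS estimator `Γ̂ = (Z'Z)⁻¹Z'y`. -/
def Γhat (n : ℕ) (ω : Ω n) : Fin J → ℝ :=
  ((M.Z n ω)ᵀ * M.Z n ω)⁻¹ *ᵥ ((M.Z n ω)ᵀ *ᵥ M.y n ω)

/-- The matrix `Ĥ` with blocks `γ̂₁, 0, γ̂₂, I` for the combination `S` (first block row:
instruments in `S`; second block row: the remaining instruments). -/
def Hhat (S : Combo J P) (n : ℕ) (ω : Ω n) :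
    Matrix (Fin P ⊕ Fin (J - P)) (Fin P ⊕ Fin (J - P)) ℝ :=
  Matrix.fromBlocks
    (Matrix.of fun i k => M.γhat n ω (comboEmb S i) k) 0
    (Matrix.of fun i k => M.γhat n ω (comboComplEmb S i) k) 1

/-- The just-identified 2SLS estimator `(β̂_[j]', α̂_[j]')' = Ĥ⁻¹ Γ̂` (with the entries of
`Γ̂` reordered so that the instruments of `S` come first), using `Z_[j]` as instruments
and the remaining instruments as controls. -/
def θhat (S : Combo J P) (n : ℕ) (ω : Ω n) : Fin P ⊕ Fin (J - P) → ℝ :=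
  (M.Hhat S n ω)⁻¹ *ᵥ fun idx => M.Γhat n ω (Sum.elim (comboEmb S) (comboComplEmb S) idx)

/-- The just-identified estimator `β̂_[j]` of `β` for combination `S`. -/
def βhat (S : Combo J P) (n : ℕ) (ω : Ω n) : Fin P → ℝ := fun i => M.θhat S n ω (Sum.inl i)

/-- The estimated coefficients `α̂_[j]` of the control instruments for combination `S`. -/
def αhat (S : Combo J P) (n : ℕ) (ω : Ω n) : Fin (J - P) → ℝ :=
  fun i => M.θhat S n ω (Sum.inr i)

/-- The inconsistency `q = γ_[j]⁻¹ α_[j]` of the just-identified estimator based on `S`;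
the probability limit of `β̂_[j]` is `β + q`. -/
def incons (S : Combo J P) : Fin P → ℝ := (rowsOf M.γ S)⁻¹ *ᵥ subvec M.α S

/-- Assumption 2a: `γ_[j]` has rank `P` (is nonsingular) for every `P`-subset `[j]`. -/
def Assumption2a : Prop := ∀ S : Combo J P, IsUnit (rowsOf M.γ S).det

/-- Assumption 3 (together with the corresponding part of Assumption 4): the errors
`w_i = (u_i, ε_i')'` are centered with finite second-moment matrix `Σ`, in the sense that
`n⁻¹ ∑ᵢ w_i →p 0` and `n⁻¹ W'W →p Σ`. -/
def Assumption3 (Sigw : Matrix (Unit ⊕ Fin P) (Unit ⊕ Fin P) ℝ) : Prop :=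
  (∀ a, TendstoInProb M.μ (fun n ω => (n : ℝ)⁻¹ * ∑ i, M.W n ω i a) 0) ∧
  (∀ a b, TendstoInProb M.μ (fun n ω => (n : ℝ)⁻¹ * ((M.W n ω)ᵀ * M.W n ω) a b) (Sigw a b))

/-- Assumption 4: `n⁻¹Z'Z →p Q`, `n⁻¹Z'u →p 0`, `n⁻¹Z'E →p 0`. -/
def Assumption4 (Q : Matrix (Fin J) (Fin J) ℝ) : Prop :=
  (∀ j k, TendstoInProb M.μ (fun n ω => (n : ℝ)⁻¹ * ((M.Z n ω)ᵀ * M.Z n ω) j k) (Q j k)) ∧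
  (∀ j, TendstoInProb M.μ (fun n ω => (n : ℝ)⁻¹ * ((M.Z n ω)ᵀ *ᵥ M.u n ω) j) 0) ∧
  (∀ j p, TendstoInProb M.μ (fun n ω => (n : ℝ)⁻¹ * ((M.Z n ω)ᵀ * M.Eps n ω) j p) 0)

/-- The CLT statistic `n^{-1/2} ∑ᵢ vec(z_i w_i')` of Assumption 5. -/
def cltStat (n : ℕ) (ω : Ω n) : (Unit ⊕ Fin P) × Fin J → ℝ :=
  fun aj => (Real.sqrt n)⁻¹ * ((M.Z n ω)ᵀ * M.W n ω) aj.2 aj.1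

/-- Assumption 5: `n^{-1/2} ∑ᵢ vec(z_i w_i') →d N(0, Σ ⊗ Q)`. -/
def Assumption5 (Q : Matrix (Fin J) (Fin J) ℝ)
    (Sigw : Matrix (Unit ⊕ Fin P) (Unit ⊕ Fin P) ℝ) : Prop :=
  ∃ ν : Measure ((Unit ⊕ Fin P) × Fin J → ℝ),
    IsCenteredGaussian ν (Matrix.kroneckerMap (· * ·) Sigw Q) ∧
    TendstoInDist M.μ M.cltStat ν

end IVModel

/-- Squared Euclidean distance between two points of `ℝ^P`. -/
def sqDist {P : ℕ} (x y : Fin P → ℝ) : ℝ := ∑ i, (x i - y i) ^ 2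

/-- The arithmetic mean of the points `x j`, `j ∈ A` (the cluster mean `S̄`). -/
def clMean {ι : Type*} {P : ℕ} (x : ι → Fin P → ℝ) (A : Finset ι) : Fin P → ℝ :=
  (A.card : ℝ)⁻¹ • ∑ j ∈ A, x j

/-- Ward's weighted squared Euclidean distance
`(|A||B|/(|A|+|B|))·‖Ā − B̄‖²` between two clusters. -/
def wardDist {ι : Type*} {P : ℕ} (x : ι → Fin P → ℝ) (A B : Finset ι) : ℝ :=
  ((A.card : ℝ) * B.card / ((A.card : ℝ) + B.card)) * sqDist (clMean x A) (clMean x B)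

/-- A partition of the (finite) index type `ι`: nonempty clusters, every index in exactly
one cluster. -/
def IsClustering {ι : Type*} (C : Finset (Finset ι)) : Prop :=
  (∀ A ∈ C, A.Nonempty) ∧ ∀ j : ι, ∃! A, A ∈ C ∧ j ∈ A

/-- One step of Ward's agglomerative algorithm: merge the two clusters minimizing the
weighted squared Euclidean distance. -/
def WardStep {ι : Type*} [DecidableEq ι] {P : ℕ} (x : ι → Fin P → ℝ)
    (C1 C2 : Finset (Finset ι)) : Prop :=
  ∃ A ∈ C1, ∃ B ∈ C1, A ≠ B ∧
    (∀ A' ∈ C1, ∀ B' ∈ C1, A' ≠ B' → wardDist x A B ≤ wardDist x A' B') ∧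
    C2 = insert (A ∪ B) ((C1.erase A).erase B)

/-- A clustering path of Ward's algorithm on the points `x j ∈ ℝ^P`, `j : ι`: `path K` is
the partition with `K` clusters; the path starts from the singleton partition and each
partition is obtained from the previous one by a Ward merging step. -/
def IsWardPath {ι : Type*} [Fintype ι] [DecidableEq ι] {P : ℕ} (x : ι → Fin P → ℝ)
    (path : ℕ → Finset (Finset ι)) : Prop :=
  path (Fintype.card ι) = Finset.univ.image (fun j => ({j} : Finset ι)) ∧
  ∀ K, 1 ≤ K → K < Fintype.card ι → WardStep x (path (K + 1)) (path K)

namespace IVModel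

variable {J P : ℕ} {Ω : ℕ → Type*} [∀ n, MeasurableSpace (Ω n)] (M : IVModel J P Ω)

/-- The (finite) family `F_q` of IV combinations whose just-identified estimators
converge to `β + q`. -/
def family (q : Fin P → ℝ) : Finset (Combo J P) :=
  Finset.univ.filter fun S : Combo J P => M.incons S = q

/-- The set `V` of valid instruments, `{j : α_j = 0}`. -/
def validSet : Finset (Fin J) := Finset.univ.filter fun j => M.α j = 0

/-- Assumption 6a (family plurality): `C(g, P) > max_{q ≠ 0} |F_q|`, where `g` is the
number of valid instruments. -/
def FamilyPlurality : Prop :=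
  ∀ q : Fin P → ℝ, q ≠ 0 → (M.family q).card < Nat.choose M.validSet.card P

end IVModel


section AuxProb
variable {Ω : ℕ → Type*} [∀ n, MeasurableSpace (Ω n)] {μ : ∀ n, Measure (Ω n)}

lemma tendstoInProb_congr {E : Type*} [PseudoMetricSpace E]
    {X Y : ∀ n, Ω n → E} {c : E}
    (hXY : ∀ n, 1 ≤ n → ∀ ω, X n ω = Y n ω)
    (h : TendstoInProb μ X c) : TendstoInProb μ Y c := by
  intro ε hε
  refine (h ε hε).congr' ?_
  filter_upwards [Filter.eventually_ge_atTop 1] with n hn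
  congr 1
  ext ω
  simp only [Set.mem_setOf_eq, hXY n hn ω]

lemma tendstoInProb_comp {E F : Type*} [PseudoMetricSpace E] [PseudoMetricSpace F]
    {X : ∀ n, Ω n → E} {c : E} (h : TendstoInProb μ X c)
    {f : E → F} (hf : ContinuousAt f c) :
    TendstoInProb μ (fun n ω => f (X n ω)) (f c) := by
  intro ε hε
  rcases Metric.continuousAt_iff.mp hf ε hε with ⟨δ, hδ, hfδ⟩
  have hsub : ∀ n, {ω | ε < dist (f (X n ω)) (f c)} ⊆ {ω | δ/2 < dist (X n ω) c} := by
    intro n ω hω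
    simp only [Set.mem_setOf_eq] at hω ⊢
    by_contra hcon
    push_neg at hcon
    have := hfδ (show dist (X n ω) c < δ from lt_of_le_of_lt hcon (by linarith))
    exact absurd this (not_lt.mpr hω.le)
  exact tendsto_of_tendsto_of_tendsto_of_le_of_le tendsto_const_nhds (h (δ/2) (by linarith))
    (fun n => zero_le') (fun n => measure_mono (hsub n))

lemma tendstoInProb_pi {ι : Type*} [Fintype ι]
    {X : ∀ n, Ω n → ι → ℝ} {c : ι → ℝ}
    (h : ∀ i, TendstoInProb μ (fun n ω => X n ω i) (c i)) :
    TendstoInProb μ X c := by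
  intro ε hε
  have hsub : ∀ n, {ω | ε < dist (X n ω) c} ⊆
      ⋃ i ∈ (univ : Finset ι), {ω | ε < dist (X n ω i) (c i)} := by
    intro n ω hω
    simp only [Set.mem_setOf_eq] at hω
    by_contra hcon
    simp only [Set.mem_iUnion, Set.mem_setOf_eq, not_exists] at hcon
    have hle : dist (X n ω) c ≤ ε := by
      rw [dist_pi_le_iff hε.le]
      intro i
      exact not_lt.mp (hcon i (mem_univ i))
    exact absurd hω (not_lt.mpr hle)
  have hsum : Tendsto (fun n => ∑ i ∈ (univ : Finset ι), μ n {ω | ε < dist (X n ω i) (c i)})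
      atTop (nhds 0) := by
    have := tendsto_finset_sum (univ : Finset ι) (fun i _ => h i ε hε)
    simpa using this
  refine tendsto_of_tendsto_of_tendsto_of_le_of_le tendsto_const_nhds hsum
    (fun n => zero_le') (fun n => le_trans (measure_mono (hsub n)) (measure_biUnion_finset_le _ _))

end AuxProb

section Ward
variable {ι : Type*} [Fintype ι] [DecidableEq ι] {P : ℕ}

/-- value of a cluster -/
def clVal {ι : Type*} {P : ℕ} (t : ι → Fin P → ℝ) (A : Finset ι) : Fin P → ℝ :=
  if h : A.Nonempty then t h.choose else 0

lemma clVal_eq {t : ι → Fin P → ℝ} {A : Finset ι} (hA : A.Nonempty)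
    (hconst : ∀ i ∈ A, ∀ j ∈ A, t i = t j) {i : ι} (hi : i ∈ A) : clVal t A = t i := by
  rw [clVal, dif_pos hA]
  exact hconst _ hA.choose_spec _ hi

lemma ward_recovers [Nonempty ι]
    (x t : ι → Fin P → ℝ) (path : ℕ → Finset (Finset ι))
    (hpath : IsWardPath x path)
    (hkey : ∀ A B A' B' : Finset ι, A.Nonempty → B.Nonempty → A'.Nonempty → B'.Nonempty →
      (∀ i ∈ A, ∀ j ∈ A, t i = t j) → (∀ i ∈ B, ∀ j ∈ B, t i = t j) →
      (∀ i ∈ A', ∀ j ∈ A', t i = t j) → (∀ i ∈ B', ∀ j ∈ B', t i = t j) →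
      (∀ i ∈ A, ∀ j ∈ B, t i = t j) → (∃ i ∈ A', ∃ j ∈ B', t i ≠ t j) →
      wardDist x A B < wardDist x A' B') :
    path ((univ.image t).card) =
      (univ.image t).image (fun q => univ.filter fun i => t i = q) := by
  classical
  set N := Fintype.card ι with hN
  set Qf := (univ.image t).card with hQf
  have hQf1 : 1 ≤ Qf := card_pos.mpr ((univ_nonempty).image t)
  have hQfN : Qf ≤ N := le_trans card_image_le (by simp [hN])
  -- the invariant
  have hInv : ∀ m K, K + m = N → Qf ≤ K →
      IsClustering (path K) ∧ (path K).card = K ∧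
        ∀ A ∈ path K, ∀ i ∈ A, ∀ j ∈ A, t i = t j := by
    intro m
    induction m with
    | zero =>
      intro K hKm _
      simp only [Nat.add_zero] at hKm
      subst hKm
      rw [hpath.1]
      refine ⟨⟨?_, ?_⟩, ?_, ?_⟩
      · intro A hA
        rcases mem_image.mp hA with ⟨j, _, rfl⟩
        exact singleton_nonempty j
      · intro j
        refine ⟨{j}, ⟨mem_image_of_mem _ (mem_univ j), mem_singleton_self j⟩, ?_⟩
        rintro B ⟨hB, hjB⟩
        rcases mem_image.mp hB with ⟨j', _, rfl⟩
        rcases mem_singleton.mp hjB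
        rfl
      · rw [card_image_of_injective _ (fun a b h => singleton_injective h), card_univ]
      · intro A hA i hi j hj
        rcases mem_image.mp hA with ⟨j', _, rfl⟩
        rw [mem_singleton.mp hi, mem_singleton.mp hj]
    | succ m ih =>
      intro K hKm hQK
      have hIH := ih (K+1) (by omega) (by omega)
      obtain ⟨⟨hne1, huq1⟩, hcard1, hconst1⟩ := hIH
      have hstep := hpath.2 K (le_trans hQf1 hQK) (by omega)
      obtain ⟨A, hA, B, hB, hAB, hmin, hC2⟩ := hstep
      -- uniqueness helper
      have huniq : ∀ {D D' : Finset ι}, D ∈ path (K+1) → D' ∈ path (K+1) →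
          ∀ {j}, j ∈ D → j ∈ D' → D = D' := by
        intro D D' hD hD' j hj hj'
        obtain ⟨U, _, hU⟩ := huq1 j
        rw [hU D ⟨hD, hj⟩, hU D' ⟨hD', hj'⟩]
      -- pigeonhole: two distinct clusters with the same value
      have hpig : ∃ A' ∈ path (K+1), ∃ B' ∈ path (K+1), A' ≠ B' ∧
          clVal t A' = clVal t B' := by
        have hmap : ∀ D ∈ path (K+1), clVal t D ∈ univ.image t := by
          intro D hD
          rw [clVal, dif_pos (hne1 D hD)]
          exact mem_image_of_mem t (mem_univ _)
        have hlt : (univ.image t).card < (path (K+1)).card := by omega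
        obtain ⟨A', hA', B', hB', hne, heq⟩ :=
          exists_ne_map_eq_of_card_lt_of_maps_to hlt hmap
        exact ⟨A', hA', B', hB', hne, heq⟩
      obtain ⟨A', hA', B', hB', hA'B', heq⟩ := hpig
      -- the same-value pair
      have hval : ∀ i ∈ A', ∀ j ∈ B', t i = t j := by
        intro i hi j hj
        rw [← clVal_eq (hne1 A' hA') (hconst1 A' hA') hi, heq,
          clVal_eq (hne1 B' hB') (hconst1 B' hB') hj]
      -- the merged pair has equal values
      have hABval : ∀ i ∈ A, ∀ j ∈ B, t i = t j := by
        by_contra hcon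
        push_neg at hcon
        obtain ⟨i, hi, j, hj, hij⟩ := hcon
        have := hkey A' B' A B (hne1 A' hA') (hne1 B' hB') (hne1 A hA) (hne1 B hB)
          (hconst1 A' hA') (hconst1 B' hB') (hconst1 A hA) (hconst1 B hB)
          hval ⟨i, hi, j, hj, hij⟩
        exact absurd (hmin A' hA' B' hB' hA'B') (not_le.mpr this)
      -- A ∪ B not among the rest
      have hABnot : A ∪ B ∉ (((path (K+1)).erase A).erase B) := by
        intro hmem
        have hmem1 : A ∪ B ∈ path (K+1) := mem_of_mem_erase (mem_of_mem_erase hmem)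
        obtain ⟨a, ha⟩ := hne1 A hA
        have : A ∪ B = A := huniq hmem1 hA (mem_union_left _ ha) ha
        exact (ne_of_mem_erase (mem_of_mem_erase hmem)) this
      have hBe : B ∈ (path (K+1)).erase A := mem_erase.mpr ⟨fun h => hAB h.symm, hB⟩
      constructor
      · constructor
        · intro D hD
          rw [hC2] at hD
          rcases mem_insert.mp hD with rfl | hD
          · exact (hne1 A hA).mono subset_union_left
          · exact hne1 D (mem_of_mem_erase (mem_of_mem_erase hD))
        · intro j
          by_cases hj : j ∈ A ∪ B
          · have hABm : A ∪ B ∈ path K := by rw [hC2]; exact mem_insert_self _ _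
            refine ⟨A ∪ B, ⟨hABm, hj⟩, ?_⟩
            rintro D ⟨hD, hjD⟩
            rw [hC2] at hD
            rcases mem_insert.mp hD with rfl | hD
            · rfl
            · exfalso
              have hD1 : D ∈ path (K+1) := mem_of_mem_erase (mem_of_mem_erase hD)
              rcases mem_union.mp hj with hjA | hjB
              · exact (ne_of_mem_erase (mem_of_mem_erase hD)) (huniq hD1 hA hjD hjA)
              · exact (ne_of_mem_erase hD) (huniq hD1 hB hjD hjB)
          · obtain ⟨D₀, ⟨hD₀, hjD₀⟩, hD₀u⟩ := huq1 j
            have hD₀A : D₀ ≠ A := fun h => hj (mem_union_left _ (h ▸ hjD₀))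
            have hD₀B : D₀ ≠ B := fun h => hj (mem_union_right _ (h ▸ hjD₀))
            have hD₀m : D₀ ∈ path K := by
              rw [hC2]
              exact mem_insert_of_mem (mem_erase.mpr ⟨hD₀B, mem_erase.mpr ⟨hD₀A, hD₀⟩⟩)
            refine ⟨D₀, ⟨hD₀m, hjD₀⟩, ?_⟩
            rintro D ⟨hD, hjD⟩
            rw [hC2] at hD
            rcases mem_insert.mp hD with rfl | hD
            · exact absurd hjD hj
            · exact huniq (mem_of_mem_erase (mem_of_mem_erase hD)) hD₀ hjD hjD₀
      constructor
      · rw [hC2, card_insert_of_notMem hABnot, card_erase_of_mem hBe,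
          card_erase_of_mem hA, hcard1]
        omega
      · intro D hD i hi j hj
        rw [hC2] at hD
        rcases mem_insert.mp hD with rfl | hD
        · rcases mem_union.mp hi with hiA | hiB <;> rcases mem_union.mp hj with hjA | hjB
          · exact hconst1 A hA i hiA j hjA
          · exact hABval i hiA j hjB
          · exact (hABval j hjA i hiB).symm
          · exact hconst1 B hB i hiB j hjB
        · exact hconst1 D (mem_of_mem_erase (mem_of_mem_erase hD)) i hi j hj
  -- conclusion at K = Qf
  obtain ⟨⟨hne, huq⟩, hcard, hconst⟩ := hInv (N - Qf) Qf (by omega) le_rfl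
  -- value map is surjective hence injective
  have hmapsto : ∀ D ∈ path Qf, clVal t D ∈ univ.image t := by
    intro D hD
    rw [clVal, dif_pos (hne D hD)]
    exact mem_image_of_mem t (mem_univ _)
  have hsurj : ∀ q ∈ univ.image t, ∃ D ∈ path Qf, clVal t D = q := by
    intro q hq
    rcases mem_image.mp hq with ⟨j, _, rfl⟩
    obtain ⟨D, ⟨hD, hjD⟩, _⟩ := huq j
    exact ⟨D, hD, clVal_eq (hne D hD) (hconst D hD) hjD⟩
  have hinj : ∀ D ∈ path Qf, ∀ D' ∈ path Qf, clVal t D = clVal t D' → D = D' := by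
    have := inj_on_of_surj_on_of_card_le (s := path Qf) (t := univ.image t)
      (fun D _ => clVal t D) (fun D hD => hmapsto D hD)
      (fun q hq => by obtain ⟨D, hD, hDq⟩ := hsurj q hq; exact ⟨D, hD, hDq⟩)
      (by omega)
    intro D hD D' hD' h
    exact this hD hD' h
  have hfib : ∀ D ∈ path Qf, D = univ.filter fun i => t i = clVal t D := by
    intro D hD
    ext i
    simp only [mem_filter, mem_univ, true_and]
    constructor
    · intro hi
      exact (clVal_eq (hne D hD) (hconst D hD) hi).symm
    · intro hi
      obtain ⟨D', ⟨hD', hiD'⟩, _⟩ := huq i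
      have : clVal t D' = clVal t D := by
        rw [clVal_eq (hne D' hD') (hconst D' hD') hiD', hi]
      rw [← hinj D' hD' D hD this]
      exact hiD'
  apply Subset.antisymm
  · intro D hD
    rw [mem_image]
    exact ⟨clVal t D, hmapsto D hD, (hfib D hD).symm⟩
  · intro F hF
    rcases mem_image.mp hF with ⟨q, hq, rfl⟩
    obtain ⟨D, hD, hDq⟩ := hsurj q hq
    rw [← hDq, ← hfib D hD]
    exact hD
end Ward

section Close
variable {ι : Type*} {P : ℕ}

lemma clMean_close {A : Finset ι} (hA : A.Nonempty) {x : ι → Fin P → ℝ} {q : Fin P → ℝ}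
    {ε : ℝ} (h : ∀ i ∈ A, ∀ k, |x i k - q k| ≤ ε) (k : Fin P) :
    |clMean x A k - q k| ≤ ε := by
  have hc : (0:ℝ) < (A.card : ℝ) := by exact_mod_cast card_pos.mpr hA
  have hmk : clMean x A k - q k = (A.card : ℝ)⁻¹ * ∑ i ∈ A, (x i k - q k) := by
    have h1 : clMean x A k = (A.card : ℝ)⁻¹ * ∑ i ∈ A, x i k := by
      rw [clMean, Pi.smul_apply, Finset.sum_apply, smul_eq_mul]
    have h2 : ∑ i ∈ A, (x i k - q k) = (∑ i ∈ A, x i k) - (A.card : ℝ) * q k := by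
      rw [Finset.sum_sub_distrib, Finset.sum_const, nsmul_eq_mul]
    rw [h1, h2]
    field_simp
  rw [hmk, abs_mul, abs_of_pos (inv_pos.mpr hc)]
  have hsum : |∑ i ∈ A, (x i k - q k)| ≤ (A.card : ℝ) * ε := by
    refine le_trans (Finset.abs_sum_le_sum_abs _ _) ?_
    calc ∑ i ∈ A, |x i k - q k| ≤ ∑ _i ∈ A, ε := Finset.sum_le_sum (fun i hi => h i hi k)
    _ = (A.card : ℝ) * ε := by rw [Finset.sum_const, nsmul_eq_mul]
  calc (A.card : ℝ)⁻¹ * |∑ i ∈ A, (x i k - q k)| ≤ (A.card : ℝ)⁻¹ * ((A.card : ℝ) * ε) := by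
        apply mul_le_mul_of_nonneg_left hsum (le_of_lt (inv_pos.mpr hc))
  _ = ε := by field_simp

lemma hkey_of_close [Fintype ι] (x t : ι → Fin P → ℝ) (ε Δ : ℝ)
    (hε : 0 ≤ ε) (hΔ : 2 * ε < Δ)
    (hsep : ∀ i j : ι, t i ≠ t j → ∃ k, Δ ≤ |t i k - t j k|)
    (hclose : ∀ i k, |x i k - t i k| ≤ ε)
    (hnum : (Fintype.card ι : ℝ) * ((P : ℝ) * (4 * ε ^ 2)) < (Δ - 2*ε)^2 / 2) :
    ∀ A B A' B' : Finset ι, A.Nonempty → B.Nonempty → A'.Nonempty → B'.Nonempty →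
      (∀ i ∈ A, ∀ j ∈ A, t i = t j) → (∀ i ∈ B, ∀ j ∈ B, t i = t j) →
      (∀ i ∈ A', ∀ j ∈ A', t i = t j) → (∀ i ∈ B', ∀ j ∈ B', t i = t j) →
      (∀ i ∈ A, ∀ j ∈ B, t i = t j) → (∃ i ∈ A', ∃ j ∈ B', t i ≠ t j) →
      wardDist x A B < wardDist x A' B' := by
  intro A B A' B' hA hB hA' hB' hcA hcB hcA' hcB' hsame hdiff
  obtain ⟨a, ha⟩ := hA.exists_mem
  obtain ⟨b, hb⟩ := hB.exists_mem
  obtain ⟨a', ha', b', hb', hab'⟩ := hdiff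
  -- cluster means are close to common values
  have hmeanA : ∀ k, |clMean x A k - t a k| ≤ ε :=
    clMean_close hA (fun i hi k => by rw [hcA a ha i hi]; exact hclose i k)
  have hmeanB : ∀ k, |clMean x B k - t a k| ≤ ε :=
    clMean_close hB (fun i hi k => by rw [hsame a ha i hi]; exact hclose i k)
  have hmeanA' : ∀ k, |clMean x A' k - t a' k| ≤ ε :=
    clMean_close hA' (fun i hi k => by rw [hcA' a' ha' i hi]; exact hclose i k)
  have hmeanB' : ∀ k, |clMean x B' k - t b' k| ≤ ε :=
    clMean_close hB' (fun i hi k => by rw [hcB' b' hb' i hi]; exact hclose i k)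
  -- cardinalities
  have hcard : ∀ C : Finset ι, C.Nonempty → (1:ℝ) ≤ (C.card : ℝ) ∧ (C.card : ℝ) ≤ Fintype.card ι := by
    intro C hC
    constructor
    · exact_mod_cast card_pos.mpr hC
    · exact_mod_cast card_le_card (subset_univ C) |>.trans (le_of_eq card_univ)
  obtain ⟨ha1, haN⟩ := hcard A hA
  obtain ⟨hb1, _⟩ := hcard B hB
  obtain ⟨ha'1, _⟩ := hcard A' hA'
  obtain ⟨hb'1, _⟩ := hcard B' hB'
  -- within distance bound
  have hsqAB : sqDist (clMean x A) (clMean x B) ≤ (P : ℝ) * (4 * ε ^ 2) := by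
    rw [sqDist]
    calc ∑ k, (clMean x A k - clMean x B k) ^ 2 ≤ ∑ _k : Fin P, 4 * ε ^ 2 := by
          refine Finset.sum_le_sum (fun k _ => ?_)
          have h1 : |clMean x A k - clMean x B k| ≤ 2 * ε := by
            have := abs_sub_abs_le_abs_sub (clMean x A k) (clMean x B k)
            calc |clMean x A k - clMean x B k|
                = |(clMean x A k - t a k) - (clMean x B k - t a k)| := by ring_nf
              _ ≤ |clMean x A k - t a k| + |clMean x B k - t a k| := abs_sub _ _
              _ ≤ 2 * ε := by have := hmeanA k; have := hmeanB k; linarith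
          calc (clMean x A k - clMean x B k) ^ 2 = |clMean x A k - clMean x B k| ^ 2 := (sq_abs _).symm
            _ ≤ (2 * ε) ^ 2 := by
                apply pow_le_pow_left₀ (abs_nonneg _) h1
            _ = 4 * ε ^ 2 := by ring
    _ = (P : ℝ) * (4 * ε ^ 2) := by simp [Finset.sum_const, card_univ, nsmul_eq_mul]
  have hwAB : (A.card : ℝ) * B.card / ((A.card : ℝ) + B.card) ≤ (Fintype.card ι : ℝ) := by
    rw [div_le_iff₀ (by linarith)]
    nlinarith
  have hward1 : wardDist x A B ≤ (Fintype.card ι : ℝ) * ((P : ℝ) * (4 * ε ^ 2)) := by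
    rw [wardDist]
    apply mul_le_mul hwAB hsqAB ?_ (by positivity)
    · rw [sqDist]; positivity
  -- cross distance bound
  obtain ⟨k₀, hk₀⟩ := hsep a' b' hab'
  have hsqA'B' : (Δ - 2*ε)^2 ≤ sqDist (clMean x A') (clMean x B') := by
    rw [sqDist]
    have hterm : (Δ - 2*ε)^2 ≤ (clMean x A' k₀ - clMean x B' k₀) ^ 2 := by
      have hlow : Δ - 2*ε ≤ |clMean x A' k₀ - clMean x B' k₀| := by
        have h1 := abs_le.mp (hmeanA' k₀)
        have h2 := abs_le.mp (hmeanB' k₀)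
        rcases abs_cases (t a' k₀ - t b' k₀) with ⟨heq, _⟩ | ⟨heq, _⟩ <;> rw [heq] at hk₀
        · rw [le_abs]
          left
          linarith [h1.1, h1.2, h2.1, h2.2]
        · rw [le_abs]
          right
          linarith [h1.1, h1.2, h2.1, h2.2]
      calc (Δ - 2*ε)^2 ≤ |clMean x A' k₀ - clMean x B' k₀| ^ 2 :=
            pow_le_pow_left₀ (by linarith) hlow 2
        _ = (clMean x A' k₀ - clMean x B' k₀) ^ 2 := sq_abs _
    refine le_trans hterm (Finset.single_le_sum
      (f := fun k => (clMean x A' k - clMean x B' k) ^ 2) (fun k _ => sq_nonneg _) (mem_univ k₀))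
  have hwA'B' : (1:ℝ)/2 ≤ (A'.card : ℝ) * B'.card / ((A'.card : ℝ) + B'.card) := by
    rw [div_le_div_iff₀ (by norm_num) (by linarith)]
    nlinarith
  have hward2 : (Δ - 2*ε)^2 / 2 ≤ wardDist x A' B' := by
    rw [wardDist]
    calc (Δ - 2*ε)^2 / 2 = (1/2) * (Δ - 2*ε)^2 := by ring
      _ ≤ ((A'.card : ℝ) * B'.card / ((A'.card : ℝ) + B'.card)) * sqDist (clMean x A') (clMean x B') := by
          apply mul_le_mul hwA'B' hsqA'B' (by positivity) ?_
          have : (0:ℝ) < (A'.card : ℝ) + B'.card := by linarith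
          positivity
  linarith
end Close


section AuxConsistency

/-- scalar-inverse commutes with matrix inverse over a field -/
lemma smul_inv_eq {m : Type*} [Fintype m] [DecidableEq m] (k : ℝ) (hk : k ≠ 0)
    (A : Matrix m m ℝ) : (k • A)⁻¹ = k⁻¹ • A⁻¹ := by
  by_cases h : IsUnit A.det
  · have : Invertible k := invertibleOfNonzero hk
    rw [Matrix.inv_smul (A := A) k h, invOf_eq_inv]
  · have h2 : ¬IsUnit ((k • A).det) := by
      rw [Matrix.det_smul]
      intro hu
      exact h (isUnit_of_mul_isUnit_right hu)
    rw [Matrix.nonsing_inv_apply_not_isUnit _ h2, Matrix.nonsing_inv_apply_not_isUnit _ h,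
      smul_zero]

/-- index type for the joint vector of sample moments -/
abbrev Kap (J P : ℕ) := (Fin J × Fin J) ⊕ (Fin J ⊕ Fin J × Fin P)

def matA {J P : ℕ} (v : Kap J P → ℝ) : Matrix (Fin J) (Fin J) ℝ :=
  Matrix.of fun j k => v (Sum.inl (j, k))
def vecb {J P : ℕ} (v : Kap J P → ℝ) : Fin J → ℝ := fun j => v (Sum.inr (Sum.inl j))
def matC {J P : ℕ} (v : Kap J P → ℝ) : Matrix (Fin J) (Fin P) ℝ :=
  Matrix.of fun j p => v (Sum.inr (Sum.inr (j, p)))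

variable {J P : ℕ} {Ω : ℕ → Type*} [∀ n, MeasurableSpace (Ω n)]

/-- the vector of sample moments -/
def IVModel.moment (M : IVModel J P Ω) (n : ℕ) (ω : Ω n) : Kap J P → ℝ :=
  Sum.elim (fun jk => (n : ℝ)⁻¹ * ((M.Z n ω)ᵀ * M.Z n ω) jk.1 jk.2)
    (Sum.elim (fun j => (n : ℝ)⁻¹ * ((M.Z n ω)ᵀ *ᵥ M.u n ω) j)
      (fun jp => (n : ℝ)⁻¹ * ((M.Z n ω)ᵀ * M.Eps n ω) jp.1 jp.2))

/-- the probability limit of the sample moments -/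
def limitVec {J P : ℕ} (Q : Matrix (Fin J) (Fin J) ℝ) : Kap J P → ℝ :=
  Sum.elim (fun jk => Q jk.1 jk.2) (fun _ => 0)

def gamE (M : IVModel J P Ω) (v : Kap J P → ℝ) : Matrix (Fin J) (Fin P) ℝ :=
  (matA v)⁻¹ * (matA v * M.γ + matC v)
def GamE (M : IVModel J P Ω) (v : Kap J P → ℝ) : Fin J → ℝ :=
  (matA v)⁻¹ *ᵥ ((matA v * M.γ + matC v) *ᵥ M.β + matA v *ᵥ M.α + vecb v)
def HEmat (M : IVModel J P Ω) (S : Combo J P) (v : Kap J P → ℝ) :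
    Matrix (Fin P ⊕ Fin (J - P)) (Fin P ⊕ Fin (J - P)) ℝ :=
  Matrix.fromBlocks ((gamE M v).submatrix (comboEmb S) id) 0
    ((gamE M v).submatrix (comboComplEmb S) id) 1
def FS (M : IVModel J P Ω) (S : Combo J P) (v : Kap J P → ℝ) : Fin P → ℝ :=
  fun i => ((HEmat M S v)⁻¹ *ᵥ
    fun idx => GamE M v (Sum.elim (comboEmb S) (comboComplEmb S) idx)) (Sum.inl i)

lemma IVModel.βhat_eq_FS (M : IVModel J P Ω) (S : Combo J P) {n : ℕ} (hn : 1 ≤ n) (ω : Ω n) :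
    M.βhat S n ω = FS M S (M.moment n ω) := by
  have hcn : ((n : ℝ)) ≠ 0 := by positivity
  have hc : ((n : ℝ))⁻¹ ≠ 0 := inv_ne_zero hcn
  have hA : matA (M.moment n ω) = (n:ℝ)⁻¹ • ((M.Z n ω)ᵀ * M.Z n ω) := by
    ext j k
    simp [matA, IVModel.moment, Matrix.smul_apply, smul_eq_mul]
  have hC : matC (M.moment n ω) = (n:ℝ)⁻¹ • ((M.Z n ω)ᵀ * M.Eps n ω) := by
    ext j p
    simp [matC, IVModel.moment, Matrix.smul_apply, smul_eq_mul]
  have hb : vecb (M.moment n ω) = (n:ℝ)⁻¹ • ((M.Z n ω)ᵀ *ᵥ M.u n ω) := by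
    ext j
    simp [vecb, IVModel.moment, smul_eq_mul]
  have hZD : (M.Z n ω)ᵀ * M.D n ω
      = (M.Z n ω)ᵀ * M.Z n ω * M.γ + (M.Z n ω)ᵀ * M.Eps n ω := by
    rw [IVModel.D, Matrix.mul_add, Matrix.mul_assoc]
  have hAexp : matA (M.moment n ω) * M.γ + matC (M.moment n ω)
      = (n:ℝ)⁻¹ • ((M.Z n ω)ᵀ * M.D n ω) := by
    rw [hA, hC, hZD, smul_add, Matrix.smul_mul]
  have hAinv : (matA (M.moment n ω))⁻¹ = (n:ℝ) • ((M.Z n ω)ᵀ * M.Z n ω)⁻¹ := by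
    rw [hA, smul_inv_eq _ hc, inv_inv]
  have hγ : gamE M (M.moment n ω) = M.γhat n ω := by
    rw [gamE, hAexp, hAinv, IVModel.γhat, Matrix.smul_mul, Matrix.mul_smul, smul_smul,
      mul_inv_cancel₀ hcn, one_smul]
  have hZy : (M.Z n ω)ᵀ *ᵥ M.y n ω
      = ((M.Z n ω)ᵀ * M.D n ω) *ᵥ M.β + ((M.Z n ω)ᵀ * M.Z n ω) *ᵥ M.α
        + (M.Z n ω)ᵀ *ᵥ M.u n ω := by
    rw [IVModel.y, Matrix.mulVec_add, Matrix.mulVec_add, Matrix.mulVec_mulVec,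
      Matrix.mulVec_mulVec]
  have hinner : (matA (M.moment n ω) * M.γ + matC (M.moment n ω)) *ᵥ M.β
      + matA (M.moment n ω) *ᵥ M.α + vecb (M.moment n ω)
      = (n:ℝ)⁻¹ • ((M.Z n ω)ᵀ *ᵥ M.y n ω) := by
    rw [hAexp, hA, hb, hZy, smul_add, smul_add, Matrix.smul_mulVec,
      Matrix.smul_mulVec]
  have hΓ : GamE M (M.moment n ω) = M.Γhat n ω := by
    rw [GamE, hinner, hAinv, IVModel.Γhat, Matrix.smul_mulVec, Matrix.mulVec_smul,
      smul_smul, mul_inv_cancel₀ hcn, one_smul]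
  have hH : HEmat M S (M.moment n ω) = M.Hhat S n ω := by
    rw [HEmat, hγ, IVModel.Hhat]
    rfl
  funext i
  rw [IVModel.βhat, FS, IVModel.θhat, hH, hΓ]


lemma HEmat_limit (M : IVModel J P Ω) (S : Combo J P) {Q : Matrix (Fin J) (Fin J) ℝ}
    (h1 : IsUnit Q.det) :
    HEmat M S (limitVec Q) = Matrix.fromBlocks (rowsOf M.γ S) 0 (rowsOfCompl M.γ S) 1 := by
  have hA : matA (limitVec (P := P) Q) = Q := by ext j k; rfl
  have hC : matC (limitVec (P := P) Q) = 0 := by ext j p; rfl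
  have hγ : gamE M (limitVec Q) = M.γ := by
    rw [gamE, hA, hC, add_zero, ← Matrix.mul_assoc, Matrix.nonsing_inv_mul _ h1,
      Matrix.one_mul]
  rw [HEmat, hγ]
  rfl

lemma HEmat_limit_det (M : IVModel J P Ω) (S : Combo J P) {Q : Matrix (Fin J) (Fin J) ℝ}
    (h1 : IsUnit Q.det) (h2a : M.Assumption2a) :
    IsUnit (HEmat M S (limitVec Q)).det := by
  rw [HEmat_limit M S h1, Matrix.det_fromBlocks_zero₁₂, Matrix.det_one, mul_one]
  exact h2a S

lemma FS_limit (M : IVModel J P Ω) (S : Combo J P) {Q : Matrix (Fin J) (Fin J) ℝ}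
    (h1 : IsUnit Q.det) (h2a : M.Assumption2a) :
    FS M S (limitVec Q) = fun i => M.β i + M.incons S i := by
  have hA : matA (limitVec (P := P) Q) = Q := by ext j k; rfl
  have hb : vecb (limitVec (P := P) Q) = 0 := by ext j; rfl
  have hC : matC (limitVec (P := P) Q) = 0 := by ext j p; rfl
  have hΓ : GamE M (limitVec Q) = M.γ *ᵥ M.β + M.α := by
    rw [GamE, hA, hb, hC, add_zero, add_zero, ← Matrix.mulVec_mulVec, ← Matrix.mulVec_add,
      Matrix.mulVec_mulVec, Matrix.nonsing_inv_mul _ h1, Matrix.one_mulVec]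
  have hdet := h2a S
  have hdetH : IsUnit (Matrix.fromBlocks (rowsOf M.γ S) 0 (rowsOfCompl M.γ S)
      (1 : Matrix (Fin (J-P)) (Fin (J-P)) ℝ)).det := by
    rw [Matrix.det_fromBlocks_zero₁₂, Matrix.det_one, mul_one]
    exact hdet
  set p : Fin P → ℝ := M.β + (rowsOf M.γ S)⁻¹ *ᵥ subvec M.α S with hp
  set r : Fin (J - P) → ℝ :=
    (fun i => (M.γ *ᵥ M.β + M.α) (comboComplEmb S i)) - rowsOfCompl M.γ S *ᵥ p with hr
  have htgt : (fun idx => GamE M (limitVec Q) (Sum.elim (comboEmb S) (comboComplEmb S) idx))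
      = (Matrix.fromBlocks (rowsOf M.γ S) 0 (rowsOfCompl M.γ S) 1) *ᵥ Sum.elim p r := by
    rw [Matrix.fromBlocks_mulVec]
    funext idx
    cases idx with
    | inl i =>
      have hGp : rowsOf M.γ S *ᵥ p = (rowsOf M.γ S *ᵥ M.β) + subvec M.α S := by
        rw [hp, Matrix.mulVec_add, Matrix.mulVec_mulVec, Matrix.mul_nonsing_inv _ hdet,
          Matrix.one_mulVec]
      simp only [Sum.elim_inl, Sum.elim_comp_inl, Sum.elim_comp_inr, hΓ, hGp,
        Matrix.zero_mulVec, add_zero, Pi.add_apply]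
      rfl
    | inr i =>
      simp only [Sum.elim_inr, Sum.elim_comp_inl, Sum.elim_comp_inr, hΓ, hr,
        Matrix.one_mulVec, Pi.sub_apply, Pi.add_apply]
      ring
  funext i
  simp only [FS]
  rw [HEmat_limit M S h1, htgt, Matrix.mulVec_mulVec, Matrix.nonsing_inv_mul _ hdetH,
    Matrix.one_mulVec]
  simp only [Sum.elim_inl, hp, Pi.add_apply]
  rfl

lemma contAt_mul {X : Type*} [TopologicalSpace X] {a b c : Type*} [Fintype b]
    {f : X → Matrix a b ℝ} {g : X → Matrix b c ℝ} {x₀ : X}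
    (hf : ContinuousAt f x₀) (hg : ContinuousAt g x₀) :
    ContinuousAt (fun v => f v * g v) x₀ :=
  (continuous_fst.matrix_mul continuous_snd).continuousAt.comp (hf.prodMk hg)

lemma contAt_mulVec {X : Type*} [TopologicalSpace X] {a b : Type*} [Fintype b]
    {f : X → Matrix a b ℝ} {g : X → b → ℝ} {x₀ : X}
    (hf : ContinuousAt f x₀) (hg : ContinuousAt g x₀) :
    ContinuousAt (fun v => f v *ᵥ g v) x₀ :=
  (continuous_fst.matrix_mulVec continuous_snd).continuousAt.comp (hf.prodMk hg)

lemma FS_contAt (M : IVModel J P Ω) (S : Combo J P) {Q : Matrix (Fin J) (Fin J) ℝ}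
    (h1 : IsUnit Q.det) (h2a : M.Assumption2a) :
    ContinuousAt (FS M S) (limitVec Q) := by
  have hRinv : ∀ {d : ℝ}, d ≠ 0 → ContinuousAt (Ring.inverse : ℝ → ℝ) d := by
    intro d hd
    rw [Ring.inverse_eq_inv']
    exact continuousAt_inv₀ hd
  have cA : Continuous (matA : (Kap J P → ℝ) → _) :=
    continuous_matrix fun j k => continuous_apply _
  have cC : Continuous (matC : (Kap J P → ℝ) → _) :=
    continuous_matrix fun j p => continuous_apply _
  have cb : Continuous (vecb : (Kap J P → ℝ) → _) := continuous_pi fun j => continuous_apply _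
  have hdetA : (matA (limitVec (P := P) Q)).det ≠ 0 := by
    have hA : matA (limitVec (P := P) Q) = Q := by ext j k; rfl
    rw [hA]
    exact isUnit_iff_ne_zero.mp h1
  have cAinv : ContinuousAt (fun v : Kap J P → ℝ => (matA v)⁻¹) (limitVec Q) :=
    (continuousAt_matrix_inv _ (hRinv hdetA)).comp cA.continuousAt
  have cgam : ContinuousAt (gamE M) (limitVec Q) :=
    contAt_mul cAinv ((contAt_mul cA.continuousAt continuousAt_const).add cC.continuousAt)
  have cGam : ContinuousAt (GamE M) (limitVec Q) :=
    contAt_mulVec cAinv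
      (((contAt_mulVec ((contAt_mul cA.continuousAt continuousAt_const).add cC.continuousAt)
        continuousAt_const).add (contAt_mulVec cA.continuousAt continuousAt_const)).add
        cb.continuousAt)
  have cHE : ContinuousAt (HEmat M S) (limitVec Q) := by
    have hφ : Continuous (fun G : Matrix (Fin J) (Fin P) ℝ =>
        Matrix.fromBlocks (G.submatrix (comboEmb S) id) (0 : Matrix (Fin P) (Fin (J-P)) ℝ)
          (G.submatrix (comboComplEmb S) id) (1 : Matrix (Fin (J-P)) (Fin (J-P)) ℝ)) :=
      Continuous.matrix_fromBlocks (continuous_id.matrix_submatrix _ _) continuous_const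
        (continuous_id.matrix_submatrix _ _) continuous_const
    exact hφ.continuousAt.comp cgam
  have hdetH : (HEmat M S (limitVec Q)).det ≠ 0 :=
    isUnit_iff_ne_zero.mp (HEmat_limit_det M S h1 h2a)
  have cHEinv : ContinuousAt (fun v => (HEmat M S v)⁻¹) (limitVec Q) :=
    (continuousAt_matrix_inv _ (hRinv hdetH)).comp cHE
  have ctgt : ContinuousAt (fun v => fun idx =>
      GamE M v (Sum.elim (comboEmb S) (comboComplEmb S) idx)) (limitVec Q) :=
    (continuous_pi fun idx : Fin P ⊕ Fin (J-P) =>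
      continuous_apply (Sum.elim (comboEmb S) (comboComplEmb S) idx)).continuousAt.comp cGam
  have cW := contAt_mulVec cHEinv ctgt
  exact (continuous_pi fun i : Fin P => continuous_apply (Sum.inl i)).continuousAt.comp cW

lemma IVModel.βhat_consistent (M : IVModel J P Ω) {Q : Matrix (Fin J) (Fin J) ℝ}
    (h1 : IsUnit Q.det) (h2a : M.Assumption2a) (h4 : M.Assumption4 Q) (S : Combo J P) :
    TendstoInProb M.μ (fun n ω => M.βhat S n ω) (fun i => M.β i + M.incons S i) := by
  have hm : TendstoInProb M.μ (fun n ω => M.moment n ω) (limitVec Q) := by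
    apply tendstoInProb_pi
    rintro (⟨j, k⟩ | (j | ⟨j, p⟩))
    · exact h4.1 j k
    · exact h4.2.1 j
    · exact h4.2.2 j p
  have hcomp := tendstoInProb_comp hm (FS_contAt M S h1 h2a)
  rw [FS_limit M S h1 h2a] at hcomp
  exact tendstoInProb_congr (fun n hn ω => (M.βhat_eq_FS S hn ω).symm) hcomp

end AuxConsistency

set_option maxHeartbeats 2000000 in
/-- **Corollary 2: the family structure is recovered at `K = Q_fam`.**  Under
Assumptions 1, 2a, 3, 4, 5 and family plurality, when Ward's algorithm has produced
exactly `Q_fam` clusters, with probability tending to one every cluster equals some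
family `F_q` and every family arises from exactly one cluster. -/
theorem corollary2_family_structure_recovered
    {J P : ℕ} (hPJ : P < J) {Ω : ℕ → Type*} [∀ n, MeasurableSpace (Ω n)]
    (M : IVModel J P Ω) (hprob : ∀ n, IsProbabilityMeasure (M.μ n))
    (Q : Matrix (Fin J) (Fin J) ℝ) (Sigw : Matrix (Unit ⊕ Fin P) (Unit ⊕ Fin P) ℝ)
    (h1 : Assumption1 Q) (h2a : M.Assumption2a)
    (h3 : M.Assumption3 Sigw) (h4 : M.Assumption4 Q) (h5 : M.Assumption5 Q Sigw)
    (h6a : M.FamilyPlurality)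
    (path : ∀ n, Ω n → ℕ → Finset (Finset (Combo J P)))
    (hpath : ∀ n ω, IsWardPath (fun S => M.βhat S n ω) (path n ω))
    (Qfam : ℕ) (hQfam : Qfam = (Finset.univ.image M.incons).card) :
    Tendsto
      (fun n => M.μ n {ω |
        (∀ C ∈ path n ω Qfam,
          ∃ q ∈ Finset.univ.image M.incons, C = M.family q) ∧
        (∀ q ∈ Finset.univ.image M.incons,
          ∃! C, C ∈ path n ω Qfam ∧ C = M.family q)})
      atTop (nhds 1) := by
  classical
  have h1' : IsUnit Q.det := h1
  set t : Combo J P → (Fin P → ℝ) := fun S => fun i => M.β i + M.incons S i with ht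
  haveI : Nonempty (Combo J P) := by
    obtain ⟨s, _, hs⟩ := Finset.exists_subset_card_eq (s := (univ : Finset (Fin J))) (n := P)
      (by simpa using hPJ.le)
    exact ⟨⟨s, hs⟩⟩
  -- separation constant
  set pS : Finset (Combo J P × Combo J P) :=
    (univ ×ˢ univ).filter (fun p => t p.1 ≠ t p.2) with hpS
  set Δ : ℝ := if hps : pS.Nonempty then (pS.image fun p => dist (t p.1) (t p.2)).min'
      (hps.image _) else 1 with hΔdef
  have hΔpos : 0 < Δ := by
    rw [hΔdef]
    split_ifs with hps
    · obtain ⟨p, hp, hval⟩ := mem_image.mp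
        ((pS.image fun p => dist (t p.1) (t p.2)).min'_mem (hps.image _))
      rw [← hval]
      exact dist_pos.mpr (mem_filter.mp hp).2
    · norm_num
  have hsep : ∀ S S' : Combo J P, t S ≠ t S' → ∃ k, Δ ≤ |t S k - t S' k| := by
    intro S S' hne
    have hpm : (S, S') ∈ pS :=
      mem_filter.mpr ⟨mem_product.mpr ⟨mem_univ _, mem_univ _⟩, hne⟩
    have hd : Δ ≤ dist (t S) (t S') := by
      rw [hΔdef, dif_pos ⟨(S, S'), hpm⟩]
      exact min'_le _ _ (mem_image_of_mem _ hpm)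
    by_contra hcon
    push_neg at hcon
    have : dist (t S) (t S') < Δ := by
      rw [dist_pi_lt_iff hΔpos]
      intro k
      rw [Real.dist_eq]
      exact hcon k
    linarith
  set Ncard : ℝ := (Fintype.card (Combo J P) : ℝ) with hNc
  have hm0 : (0:ℝ) ≤ Ncard * P := by positivity
  set ε : ℝ := Δ / (8 * (Ncard * P + 1)) with hεdef
  have hden : (0:ℝ) < 8 * (Ncard * P + 1) := by linarith
  have hεpos : 0 < ε := div_pos hΔpos hden
  have h2ε : 2 * ε < Δ := by
    rw [hεdef, mul_div_assoc', div_lt_iff₀ hden]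
    nlinarith
  have hnum : Ncard * ((P : ℝ) * (4 * ε ^ 2)) < (Δ - 2 * ε) ^ 2 / 2 := by
    have heΔ : Δ = ε * (8 * (Ncard * P + 1)) := by
      rw [hεdef]; field_simp
    rw [heΔ]
    nlinarith [sq_nonneg ε, mul_pos hεpos hεpos, mul_nonneg hm0 (mul_pos hεpos hεpos).le]
  -- consistency
  have hcons : ∀ S : Combo J P, TendstoInProb M.μ (fun n ω => M.βhat S n ω) (t S) :=
    fun S => M.βhat_consistent h1' h2a h4 S
  -- deterministic inclusion
  have hdet : ∀ n ω, (∀ S : Combo J P, dist (M.βhat S n ω) (t S) ≤ ε) →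
      ((∀ C ∈ path n ω Qfam, ∃ q ∈ Finset.univ.image M.incons, C = M.family q) ∧
        (∀ q ∈ Finset.univ.image M.incons, ∃! C, C ∈ path n ω Qfam ∧ C = M.family q)) := by
    intro n ω hω
    have hclose : ∀ S k, |M.βhat S n ω k - t S k| ≤ ε := by
      intro S k
      have h := dist_le_pi_dist (M.βhat S n ω) (t S) k
      rw [Real.dist_eq] at h
      exact h.trans (hω S)
    have hkey := hkey_of_close (fun S => M.βhat S n ω) t ε Δ hεpos.le h2ε hsep hclose hnum
    have hward := ward_recovers (fun S => M.βhat S n ω) t (path n ω) (hpath n ω) hkey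
    have hfinj : Function.Injective (fun q : Fin P → ℝ => (fun i => M.β i + q i)) := by
      intro q q' h
      funext i
      have h2 : M.β i + q i = M.β i + q' i := congrFun h i
      exact add_left_cancel h2
    have himg : (univ.image M.incons).image (fun q => (fun i => M.β i + q i))
        = univ.image t := by
      rw [Finset.image_image]
      rfl
    have hcardQ : Qfam = (univ.image t).card := by
      rw [hQfam, ← himg, card_image_of_injective _ hfinj]
    have hfib : ∀ q : Fin P → ℝ,
        (univ.filter fun S : Combo J P => t S = fun i => M.β i + q i) = M.family q := by
      intro q
      ext S
      simp only [mem_filter, mem_univ, true_and, IVModel.family]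
      constructor
      · intro h
        funext i
        have h2 : M.β i + M.incons S i = M.β i + q i := congrFun h i
        exact add_left_cancel h2
      · intro h
        funext i
        show M.β i + M.incons S i = M.β i + q i
        rw [h]
    rw [hcardQ]
    constructor
    · intro C hC
      rw [hward] at hC
      obtain ⟨qq, hqq, rfl⟩ := mem_image.mp hC
      obtain ⟨S₀, _, rfl⟩ := mem_image.mp hqq
      refine ⟨M.incons S₀, mem_image_of_mem _ (mem_univ _), ?_⟩
      rw [← hfib (M.incons S₀)]
    · intro q hq
      refine ⟨M.family q, ⟨?_, rfl⟩, ?_⟩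
      · rw [hward, ← hfib q]
        obtain ⟨S₀, _, rfl⟩ := mem_image.mp hq
        exact mem_image_of_mem _ (mem_image_of_mem _ (mem_univ S₀))
      · rintro C ⟨_, rfl⟩
        rfl
  -- probability assembly
  have hup : ∀ n, M.μ n {ω |
      (∀ C ∈ path n ω Qfam, ∃ q ∈ Finset.univ.image M.incons, C = M.family q) ∧
      (∀ q ∈ Finset.univ.image M.incons, ∃! C, C ∈ path n ω Qfam ∧ C = M.family q)} ≤ 1 := by
    intro n
    haveI := hprob n
    exact prob_le_one
  have hlow : ∀ n, 1 - ∑ S : Combo J P, M.μ n {ω | ε < dist (M.βhat S n ω) (t S)} ≤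
      M.μ n {ω |
        (∀ C ∈ path n ω Qfam, ∃ q ∈ Finset.univ.image M.incons, C = M.family q) ∧
        (∀ q ∈ Finset.univ.image M.incons, ∃! C, C ∈ path n ω Qfam ∧ C = M.family q)} := by
    intro n
    haveI := hprob n
    set E : Set (Ω n) := {ω | ∀ S : Combo J P, dist (M.βhat S n ω) (t S) ≤ ε} with hE
    have hsub : E ⊆ {ω |
        (∀ C ∈ path n ω Qfam, ∃ q ∈ Finset.univ.image M.incons, C = M.family q) ∧
        (∀ q ∈ Finset.univ.image M.incons, ∃! C, C ∈ path n ω Qfam ∧ C = M.family q)} :=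
      fun ω hω => hdet n ω hω
    have hcompl : Eᶜ ⊆ ⋃ S ∈ (univ : Finset (Combo J P)),
        {ω | ε < dist (M.βhat S n ω) (t S)} := by
      intro ω hω
      simp only [hE, Set.mem_compl_iff, Set.mem_setOf_eq, not_forall] at hω
      obtain ⟨S, hS⟩ := hω
      simp only [Set.mem_iUnion, Set.mem_setOf_eq]
      exact ⟨S, mem_univ S, not_le.mp hS⟩
    have hone : (1 : ENNReal) ≤ M.μ n E
        + ∑ S : Combo J P, M.μ n {ω | ε < dist (M.βhat S n ω) (t S)} := by
      calc (1 : ENNReal) = M.μ n (E ∪ Eᶜ) := by rw [Set.union_compl_self, measure_univ]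
        _ ≤ M.μ n E + M.μ n (Eᶜ) := measure_union_le _ _
        _ ≤ M.μ n E + ∑ S : Combo J P, M.μ n {ω | ε < dist (M.βhat S n ω) (t S)} := by
            refine add_le_add le_rfl (le_trans (measure_mono hcompl) ?_)
            exact measure_biUnion_finset_le _ _
    exact le_trans (tsub_le_iff_right.mpr hone) (measure_mono hsub)
  have hsum0 : Tendsto
      (fun n => ∑ S : Combo J P, M.μ n {ω | ε < dist (M.βhat S n ω) (t S)})
      atTop (nhds 0) := by
    have := tendsto_finset_sum (univ : Finset (Combo J P))
      (fun S _ => hcons S ε hεpos)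
    simpa using this
  have hlowlim : Tendsto
      (fun n => 1 - ∑ S : Combo J P, M.μ n {ω | ε < dist (M.βhat S n ω) (t S)})
      atTop (nhds 1) := by
    have hc : Tendsto (fun z : ENNReal => 1 - z) (nhds 0) (nhds (1 - 0)) :=
      (ENNReal.continuous_sub_left (by norm_num)).tendsto 0
    have := hc.comp hsum0
    simpa [Function.comp_def] using this
  exact tendsto_of_tendsto_of_tendsto_of_le_of_le hlowlim tendsto_const_nhds hlow hup
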